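/- With the operators of the type-B₂ positive representation for w₀ = s₁s₂s₁s₂ defined in the context, the following operator identities hold on the space of all functions ℂ⁴ → ℂ: e₁ ∘ f₂ = f₂ ∘ e₁, e₂ ∘ f₁ = f₁ ∘ e₂, e₁ ∘ f₁ − f₁ ∘ e₁ = (q_s − q_s⁻¹)·(K₁⁻¹ − K₁), and e₂ ∘ f₂ − f₂ ∘ e₂ = (q − q⁻¹)·(K₂⁻¹ − K₂). Equivalently, setting E_i = (2 sin(π b_i²))⁻¹ e_i and F_i = (2 sin(π b_i²))⁻¹ f_i with b₁ = b_s, b₂ = b, one has E_i F_j − F_j E_i = δ_ij (K_i − K_i⁻¹)/(q_i − q_i⁻¹) with q₁ = q_s, q₂ = q. -/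

import Mathlib

noncomputable section

open Complex

/-- The space of operators on all functions `ℂ⁴ → ℂ`. -/
abbrev OpB : Type := Module.End ℂ ((Fin 4 → ℂ) → ℂ)

/-- Weyl operator `W(ℓ,δ)`: `(W(ℓ,δ) f)(x) = exp(ℓ(x + δ/2)) · f(x + δ)`. -/
def Wop (ℓ : (Fin 4 → ℂ) → ℂ) (δ : Fin 4 → ℂ) : OpB where
  toFun f := fun x => Complex.exp (ℓ (x + (2 : ℂ)⁻¹ • δ)) * f (x + δ)
  map_add' f g := by funext x; simp [mul_add]
  map_smul' c f := by funext x; simp [smul_eq_mul]; ring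

/-- `b_s = b/√2`. -/
def bs (b : ℝ) : ℝ := b / Real.sqrt 2

/-- `q = exp(π i b²)`. -/
def qq (b : ℝ) : ℂ := Complex.exp ((Real.pi : ℂ) * Complex.I * (b : ℂ) ^ 2)

/-- `q_s = exp(π i b_s²)`. -/
def qs (b : ℝ) : ℂ := Complex.exp ((Real.pi : ℂ) * Complex.I * ((bs b : ℝ) : ℂ) ^ 2)

/-- The affine functional `ℓ_α = π (b_s (ct·t + cv·v + cl1·λ₁) + b (cu·u + cw·w + cl2·λ₂))`,
where `(t,u,v,w) = (x 0, x 1, x 2, x 3)`. -/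
def ellB (b lam1 lam2 ct cu cv cw cl1 cl2 : ℝ) : (Fin 4 → ℂ) → ℂ := fun x =>
  (Real.pi : ℂ) * (((bs b : ℝ) : ℂ) * (ct * x 0 + cv * x 2 + cl1 * lam1)
    + (b : ℂ) * (cu * x 1 + cw * x 3 + cl2 * lam2))

/-- The shift vector `δ = (−i b_s d_t, −i b d_u, −i b_s d_v, −i b d_w)`. -/
def deltaB (b dt du dv dw : ℝ) : Fin 4 → ℂ :=
  ![-Complex.I * ((bs b : ℝ) : ℂ) * dt, -Complex.I * (b : ℂ) * du,
    -Complex.I * ((bs b : ℝ) : ℂ) * dv, -Complex.I * (b : ℂ) * dw]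

/-- The operator `[α]e(d_t p_t + d_u p_u + d_v p_v + d_w p_w) = W(ℓ_α,δ) + W(−ℓ_α,δ)`. -/
def brB (b lam1 lam2 ct cu cv cw cl1 cl2 dt du dv dw : ℝ) : OpB :=
  Wop (ellB b lam1 lam2 ct cu cv cw cl1 cl2) (deltaB b dt du dv dw)
    + Wop (fun x => -(ellB b lam1 lam2 ct cu cv cw cl1 cl2 x)) (deltaB b dt du dv dw)

/-- `K₁ = W(π(b_s(2λ₁−2t−2v) + b(u+w)), 0)`. -/
def K1 (b lam1 lam2 : ℝ) : OpB := Wop (ellB b lam1 lam2 (-2) 1 (-2) 1 2 0) 0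

/-- `K₁⁻¹`, the multiplication operator with negated exponent. -/
def K1inv (b lam1 lam2 : ℝ) : OpB := Wop (ellB b lam1 lam2 2 (-1) 2 (-1) (-2) 0) 0

/-- `K₂ = W(π(b(2λ₂−2u−2w) + b_s(2t+2v)), 0)`. -/
def K2 (b lam1 lam2 : ℝ) : OpB := Wop (ellB b lam1 lam2 2 (-2) 2 (-2) 0 2) 0

/-- `K₂⁻¹`, the multiplication operator with negated exponent. -/
def K2inv (b lam1 lam2 : ℝ) : OpB := Wop (ellB b lam1 lam2 (-2) 2 (-2) 2 0 (-2)) 0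

/-- `e₁ = [t]e(−p_t−p_u+p_w) + [u−v]e(−p_u−p_v+p_w) + [v−w]e(−p_v)`. -/
def e1 (b lam1 lam2 : ℝ) : OpB :=
  brB b lam1 lam2 1 0 0 0 0 0 (-1) (-1) 0 1
    + brB b lam1 lam2 0 1 (-1) 0 0 0 0 (-1) (-1) 1
    + brB b lam1 lam2 0 0 1 (-1) 0 0 0 0 (-1) 0

/-- `e₂ = [w]e(−p_w)`. -/
def e2 (b lam1 lam2 : ℝ) : OpB := brB b lam1 lam2 0 0 0 1 0 0 0 0 0 (-1)

/-- `f₁ = [2λ₁−t]e(p_t) + [2λ₁−2t+u−v]e(p_v)`. -/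
def f1 (b lam1 lam2 : ℝ) : OpB :=
  brB b lam1 lam2 (-1) 0 0 0 2 0 1 0 0 0
    + brB b lam1 lam2 (-2) 1 (-1) 0 2 0 0 0 1 0

/-- `f₂ = [2λ₂+2t−u]e(p_u) + [2λ₂+2t−2u+2v−w]e(p_w)`. -/
def f2 (b lam1 lam2 : ℝ) : OpB :=
  brB b lam1 lam2 2 (-1) 0 0 0 2 0 1 0 0
    + brB b lam1 lam2 2 (-2) 2 (-1) 0 2 0 0 0 1

/-- The B₂ Cartan matrix `a₁₁ = a₂₂ = 2, a₁₂ = −2, a₂₁ = −1`. -/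
def aB : Fin 2 → Fin 2 → ℤ := ![![2, -2], ![-1, 2]]

/-- `q₁ = q_s`, `q₂ = q`. -/
def qi (b : ℝ) : Fin 2 → ℂ := ![qs b, qq b]

/-- The pair of `e`-generators. -/
def eOp (b lam1 lam2 : ℝ) : Fin 2 → OpB := ![e1 b lam1 lam2, e2 b lam1 lam2]

/-- The pair of `f`-generators. -/
def fOp (b lam1 lam2 : ℝ) : Fin 2 → OpB := ![f1 b lam1 lam2, f2 b lam1 lam2]

/-- The pair of `K`-generators. -/
def KOp (b lam1 lam2 : ℝ) : Fin 2 → OpB := ![K1 b lam1 lam2, K2 b lam1 lam2]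

/-- The pair of inverse `K`-generators. -/
def KinvOp (b lam1 lam2 : ℝ) : Fin 2 → OpB := ![K1inv b lam1 lam2, K2inv b lam1 lam2]

/-- `b₁ = b_s`, `b₂ = b`. -/
def bi (b : ℝ) : Fin 2 → ℝ := ![bs b, b]

/-- `E_i = (2 sin(π b_i²))⁻¹ e_i`. -/
def EOp (b lam1 lam2 : ℝ) : Fin 2 → OpB := fun i =>
  (((2 * Real.sin (Real.pi * (bi b i) ^ 2) : ℝ) : ℂ))⁻¹ • eOp b lam1 lam2 i

/-- `F_i = (2 sin(π b_i²))⁻¹ f_i`. -/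
def FOp (b lam1 lam2 : ℝ) : Fin 2 → OpB := fun i =>
  (((2 * Real.sin (Real.pi * (bi b i) ^ 2) : ℝ) : ℂ))⁻¹ • fOp b lam1 lam2 i

lemma hbs_sq (b : ℝ) : ((bs b : ℝ) : ℂ) ^ 2 = (b : ℂ) ^ 2 / 2 := by
  have h2 : ((Real.sqrt 2 : ℝ) : ℂ) ^ 2 = 2 := by
    rw [← Complex.ofReal_pow, Real.sq_sqrt (by norm_num : (0:ℝ) ≤ 2)]
    norm_num
  simp only [bs]
  push_cast
  rw [div_pow, h2]

lemma deltaB_add (b d1t d1u d1v d1w d2t d2u d2v d2w : ℝ) :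
    deltaB b d1t d1u d1v d1w + deltaB b d2t d2u d2v d2w
      = deltaB b (d1t + d2t) (d1u + d2u) (d1v + d2v) (d1w + d2w) := by
  funext i
  fin_cases i <;> simp [deltaB] <;> ring

lemma Wop_mul (b l1 l2 c1t c1u c1v c1w c1a c1b d1t d1u d1v d1w
    c2t c2u c2v c2w c2a c2b d2t d2u d2v d2w : ℝ) :
    Wop (ellB b l1 l2 c1t c1u c1v c1w c1a c1b) (deltaB b d1t d1u d1v d1w) *
      Wop (ellB b l1 l2 c2t c2u c2v c2w c2a c2b) (deltaB b d2t d2u d2v d2w)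
    = Complex.exp ((Real.pi : ℂ) * Complex.I * (b : ℂ) ^ 2 *
        ((((c1t * d2t + c1v * d2v) / 2 + c1u * d2u + c1w * d2w)
          - ((c2t * d1t + c2v * d1v) / 2 + c2u * d1u + c2w * d1w)) / 2 : ℝ)) •
      Wop (ellB b l1 l2 (c1t + c2t) (c1u + c2u) (c1v + c2v) (c1w + c2w) (c1a + c2a) (c1b + c2b))
        (deltaB b (d1t + d2t) (d1u + d2u) (d1v + d2v) (d1w + d2w)) := by
  apply LinearMap.ext; intro f
  funext x
  have hbs := hbs_sq b
  simp only [Module.End.mul_apply, Wop, LinearMap.coe_mk, AddHom.coe_mk, LinearMap.smul_apply,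
    Pi.smul_apply, smul_eq_mul, ← deltaB_add]
  rw [← mul_assoc, ← mul_assoc, ← Complex.exp_add, ← Complex.exp_add, ← add_assoc]
  congr 1
  congr 1
  simp only [ellB, deltaB, Pi.add_apply, Pi.smul_apply, smul_eq_mul,
    Matrix.cons_val_zero, Matrix.cons_val_one, Matrix.head_cons,
    Matrix.cons_val_two, Matrix.tail_cons, Matrix.cons_val_three]
  push_cast
  linear_combination (-(Real.pi:ℂ) * Complex.I *
    (((c2t:ℂ)*d1t - (c1t:ℂ)*d2t) + ((c2v:ℂ)*d1v - (c1v:ℂ)*d2v)) / 2) * hbs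
lemma ellB_neg (b l1 l2 ct cu cv cw ca cb : ℝ) :
    (fun x => -(ellB b l1 l2 ct cu cv cw ca cb x))
      = ellB b l1 l2 (-ct) (-cu) (-cv) (-cw) (-ca) (-cb) := by
  funext x; simp [ellB]; ring

lemma deltaB_zero (b : ℝ) : deltaB b 0 0 0 0 = 0 := by
  funext i; fin_cases i <;> simp [deltaB]

lemma K2_eq (b l1 l2 : ℝ) : K2 b l1 l2 = Wop (ellB b l1 l2 2 (-2) 2 (-2) 0 2) (deltaB b 0 0 0 0) := by
  rw [K2, deltaB_zero]

lemma K2inv_eq (b l1 l2 : ℝ) : K2inv b l1 l2 = Wop (ellB b l1 l2 (-2) 2 (-2) 2 0 (-2)) (deltaB b 0 0 0 0) := by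
  rw [K2inv, deltaB_zero]

lemma e2f2_comm (b lam1 lam2 : ℝ) :
    e2 b lam1 lam2 * f2 b lam1 lam2 - f2 b lam1 lam2 * e2 b lam1 lam2
      = (qq b - (qq b)⁻¹) • (K2inv b lam1 lam2 - K2 b lam1 lam2) := by
  simp only [e2, f2, brB, ellB_neg, K2_eq, K2inv_eq, qq, ← Complex.exp_neg,
    mul_add, add_mul, Wop_mul]
  norm_num
  module
lemma K1_eq (b l1 l2 : ℝ) : K1 b l1 l2 = Wop (ellB b l1 l2 (-2) 1 (-2) 1 2 0) (deltaB b 0 0 0 0) := by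
  rw [K1, deltaB_zero]

lemma K1inv_eq (b l1 l2 : ℝ) : K1inv b l1 l2 = Wop (ellB b l1 l2 2 (-1) 2 (-1) (-2) 0) (deltaB b 0 0 0 0) := by
  rw [K1inv, deltaB_zero]

lemma qs_eq (b : ℝ) : qs b = Complex.exp ((Real.pi : ℂ) * Complex.I * (b:ℂ)^2 * (1/2)) := by
  rw [qs, hbs_sq]; congr 1; ring

lemma e2f1_comm (b lam1 lam2 : ℝ) :
    e2 b lam1 lam2 * f1 b lam1 lam2 = f1 b lam1 lam2 * e2 b lam1 lam2 := by
  simp only [e2, f1, brB, ellB_neg, mul_add, add_mul, Wop_mul]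
  norm_num
  abel

lemma e1f2_comm (b lam1 lam2 : ℝ) :
    e1 b lam1 lam2 * f2 b lam1 lam2 = f2 b lam1 lam2 * e1 b lam1 lam2 := by
  simp only [e1, f2, brB, ellB_neg, mul_add, add_mul, Wop_mul]
  norm_num
  module

lemma e1f1_comm (b lam1 lam2 : ℝ) :
    e1 b lam1 lam2 * f1 b lam1 lam2 - f1 b lam1 lam2 * e1 b lam1 lam2
      = (qs b - (qs b)⁻¹) • (K1inv b lam1 lam2 - K1 b lam1 lam2) := by
  simp only [e1, f1, brB, ellB_neg, K1_eq, K1inv_eq, qs_eq, ← Complex.exp_neg,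
    mul_add, add_mul, Wop_mul]
  norm_num
  module
lemma exp_sub_inv (θ : ℝ) : Complex.exp ((θ:ℂ) * Complex.I) - (Complex.exp ((θ:ℂ) * Complex.I))⁻¹
    = ((2 * Real.sin θ : ℝ) : ℂ) * Complex.I := by
  rw [← Complex.exp_neg]
  have hn : -((θ:ℂ) * Complex.I) = (((-θ : ℝ)):ℂ) * Complex.I := by push_cast; ring
  rw [hn, Complex.exp_mul_I, Complex.exp_mul_I]
  push_cast
  simp [Real.cos_neg, Real.sin_neg]
  ring

lemma qs_form (b : ℝ) : qs b = Complex.exp (((Real.pi * (bs b)^2 : ℝ):ℂ) * Complex.I) := by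
  rw [qs]; congr 1; push_cast; ring

lemma qq_form (b : ℝ) : qq b = Complex.exp (((Real.pi * b^2 : ℝ):ℂ) * Complex.I) := by
  rw [qq]; congr 1; push_cast; ring

lemma sin_pos_of (θ : ℝ) (h0 : 0 < θ) (h1 : θ < Real.pi) : ((2 * Real.sin θ : ℝ) : ℂ) ≠ 0 := by
  have := Real.sin_pos_of_pos_of_lt_pi h0 h1
  exact_mod_cast (by positivity : (2 * Real.sin θ : ℝ) ≠ 0)
lemma diag_case (S q : ℂ) (hS : S ≠ 0) (hq : q - q⁻¹ = S * Complex.I)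
    (e f K Kinv : OpB) (h : e * f - f * e = (q - q⁻¹) • (Kinv - K)) :
    S⁻¹ • e * (S⁻¹ • f) - S⁻¹ • f * (S⁻¹ • e) = (q - q⁻¹)⁻¹ • (K - Kinv) := by
  have h2 : e * f = f * e + (S * Complex.I) • (Kinv - K) := by
    have := sub_eq_iff_eq_add.mp h; rw [← hq, this, hq]; abel
  have hsc : (S * Complex.I)⁻¹ = -(S⁻¹ * (S⁻¹ * (S * Complex.I))) := by
    have hI := Complex.I_ne_zero
    field_simp
    linear_combination Complex.I_sq
  rw [smul_mul_assoc, mul_smul_comm, smul_mul_assoc, mul_smul_comm, h2, hq, hsc]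
  module

lemma offdiag_case (S T : ℂ) (e f : OpB) (h : e * f = f * e) :
    S • e * (T • f) - T • f * (S • e) = 0 := by
  rw [smul_mul_assoc, mul_smul_comm, smul_mul_assoc, mul_smul_comm, h, smul_comm T S]
  exact sub_self _

/-- the `[e_i, f_j]` relations for the type-B₂ positive representation
corresponding to `w₀ = s₁s₂s₁s₂`, together with the equivalent formulation
`E_i F_j − F_j E_i = δ_ij (K_i − K_i⁻¹)/(q_i − q_i⁻¹)`. -/
theorem B2_ef_relations (b lam1 lam2 : ℝ) (hb0 : 0 < b) (hb1 : b < 1)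
    (hirr : Irrational (b ^ 2)) :
    e1 b lam1 lam2 * f2 b lam1 lam2 = f2 b lam1 lam2 * e1 b lam1 lam2 ∧
    e2 b lam1 lam2 * f1 b lam1 lam2 = f1 b lam1 lam2 * e2 b lam1 lam2 ∧
    e1 b lam1 lam2 * f1 b lam1 lam2 - f1 b lam1 lam2 * e1 b lam1 lam2
      = (qs b - (qs b)⁻¹) • (K1inv b lam1 lam2 - K1 b lam1 lam2) ∧
    e2 b lam1 lam2 * f2 b lam1 lam2 - f2 b lam1 lam2 * e2 b lam1 lam2
      = (qq b - (qq b)⁻¹) • (K2inv b lam1 lam2 - K2 b lam1 lam2) ∧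
    ∀ i j : Fin 2,
      EOp b lam1 lam2 i * FOp b lam1 lam2 j - FOp b lam1 lam2 j * EOp b lam1 lam2 i
        = if i = j then
            ((qi b i - (qi b i)⁻¹)⁻¹) • (KOp b lam1 lam2 i - KinvOp b lam1 lam2 i)
          else 0 := by
  have hpi := Real.pi_pos
  have hbs2 : (bs b)^2 = b^2 / 2 := by
    have : ((bs b : ℝ):ℂ)^2 = ((b^2/2 : ℝ) : ℂ) := by rw [hbs_sq]; push_cast; ring
    exact_mod_cast this
  have hb2 : 0 < b^2 := by positivity
  have hb2' : b^2 < 1 := by nlinarith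
  have hs1 : ((2 * Real.sin (Real.pi * (bs b)^2) : ℝ) : ℂ) ≠ 0 := by
    apply sin_pos_of <;> rw [hbs2] <;> nlinarith
  have hs2 : ((2 * Real.sin (Real.pi * b^2) : ℝ) : ℂ) ≠ 0 := by
    apply sin_pos_of <;> nlinarith
  have hq1 : qs b - (qs b)⁻¹ = ((2 * Real.sin (Real.pi * (bs b)^2) : ℝ) : ℂ) * Complex.I := by
    rw [qs_form, exp_sub_inv]
  have hq2 : qq b - (qq b)⁻¹ = ((2 * Real.sin (Real.pi * b^2) : ℝ) : ℂ) * Complex.I := by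
    rw [qq_form, exp_sub_inv]
  refine ⟨e1f2_comm b lam1 lam2, e2f1_comm b lam1 lam2, e1f1_comm b lam1 lam2,
    e2f2_comm b lam1 lam2, ?_⟩
  intro i j
  fin_cases i <;> fin_cases j <;>
    simp only [EOp, FOp, eOp, fOp, KOp, KinvOp, qi, bi, Fin.isValue, Fin.zero_eta, Fin.mk_one,
      Matrix.cons_val_zero, Matrix.cons_val_one, Matrix.head_cons, reduceIte,
      Fin.mk_zero, if_true, if_false]
  · exact diag_case _ _ hs1 hq1 _ _ _ _ (e1f1_comm b lam1 lam2)
  · exact offdiag_case _ _ _ _ (e1f2_comm b lam1 lam2)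
  · exact offdiag_case _ _ _ _ (e2f1_comm b lam1 lam2)
  · exact diag_case _ _ hs2 hq2 _ _ _ _ (e2f2_comm b lam1 lam2)

end
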